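/- There do not exist a positive-edge-weighted tree T with four distinguished leaves a, b, c, d and reals 0 ≤ d_min ≤ d_max such that: d_min ≤ d_T(a,b) ≤ d_max, d_min ≤ d_T(c,d) ≤ d_max, d_T(a,c) < d_min, d_T(a,d) < d_min, d_T(b,c) < d_min, and d_T(b,d) < d_min. (Forbidden coloring f-c(2K_2)a: a 2K_2 with all four non-edges red is not realizable.) -/

import Mathlib

open SimpleGraph

/-- A tree with positive real edge weights. -/
structure WTree (α : Type) where
  g : SimpleGraph α
  isTree : g.IsTree
  w : α → α → ℝ
  w_symm : ∀ a b, w a b = w b a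
  w_pos : ∀ a b, g.Adj a b → 0 < w a b

/-- The weighted distance between two vertices of a weighted tree: the sum of
the weights of the edges on the unique path between them. -/
noncomputable def WTree.dist {α : Type} (T : WTree α) (u v : α) : ℝ :=
  (((T.isTree.existsUnique_path u v).exists.choose).darts.map
    (fun d => T.w d.toProd.1 d.toProd.2)).sum

/-- A vertex of a weighted tree is a leaf if it has exactly one neighbor. -/
def WTree.IsLeaf {α : Type} (T : WTree α) (v : α) : Prop :=
  ∃! u, T.g.Adj v u

/-- `G = PCG(T, dmin, dmax)` via the leaf-assignment `f`. -/
def IsPCGWith {V β : Type} (G : SimpleGraph V) (T : WTree β) (f : V → β)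
    (dmin dmax : ℝ) : Prop :=
  Function.Injective f ∧ (∀ v, T.IsLeaf (f v)) ∧ (∀ b, T.IsLeaf b → ∃ v, f v = b) ∧
    ∀ u v : V, u ≠ v →
      (G.Adj u v ↔ dmin ≤ T.dist (f u) (f v) ∧ T.dist (f u) (f v) ≤ dmax)

/-- A graph is a pairwise compatibility graph. -/
def IsPCG {V : Type} (G : SimpleGraph V) : Prop :=
  ∃ (β : Type) (T : WTree β) (f : V → β) (dmin dmax : ℝ),
    0 ≤ dmin ∧ dmin ≤ dmax ∧ IsPCGWith G T f dmin dmax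

namespace WTree
variable {α : Type} (T : WTree α)

/-- weight of a walk -/
noncomputable def wt {u v : α} (p : T.g.Walk u v) : ℝ :=
  (p.darts.map (fun d => T.w d.toProd.1 d.toProd.2)).sum

lemma wt_nonneg {u v : α} (p : T.g.Walk u v) : 0 ≤ T.wt p := by
  apply List.sum_nonneg
  intro x hx
  simp only [List.mem_map] at hx
  obtain ⟨d, hd, rfl⟩ := hx
  exact le_of_lt (T.w_pos _ _ d.adj)

lemma dist_eq {u v : α} (p : T.g.Walk u v) (hp : p.IsPath) : T.dist u v = T.wt p := by
  have h : (T.isTree.existsUnique_path u v).exists.choose = p :=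
    (T.isTree.existsUnique_path u v).unique
      (T.isTree.existsUnique_path u v).exists.choose_spec hp
  unfold WTree.dist wt
  rw [h]

lemma wt_append {u v x : α} (p : T.g.Walk u v) (q : T.g.Walk v x) :
    T.wt (p.append q) = T.wt p + T.wt q := by
  simp [wt, Walk.darts_append]

lemma wt_reverse {u v : α} (p : T.g.Walk u v) : T.wt p.reverse = T.wt p := by
  unfold wt
  rw [Walk.darts_reverse, List.map_reverse, List.sum_reverse, List.map_map]
  congr 1
  apply List.map_congr_left
  intro d _
  exact T.w_symm d.toProd.2 d.toProd.1

lemma dist_comm (u v : α) : T.dist u v = T.dist v u := by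
  obtain ⟨p, hp⟩ := (T.isTree.existsUnique_path u v).exists
  rw [T.dist_eq p hp, T.dist_eq p.reverse hp.reverse, wt_reverse]

lemma dist_le_wt {u v : α} (q : T.g.Walk u v) : T.dist u v ≤ T.wt q := by
  classical
  rw [T.dist_eq q.bypass q.bypass_isPath]
  have hnd : q.bypass.darts.Nodup := by
    have := q.bypass_isPath.isTrail.edges_nodup
    exact List.Nodup.of_map Dart.edge this
  have hsub : List.Subperm q.bypass.darts q.darts := hnd.subperm q.darts_bypass_subset
  obtain ⟨l, hperm, hsl⟩ := hsub
  show (q.bypass.darts.map (fun d => T.w d.toProd.1 d.toProd.2)).sum ≤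
    (q.darts.map (fun d => T.w d.toProd.1 d.toProd.2)).sum
  rw [← (hperm.map (fun d => T.w d.toProd.1 d.toProd.2)).sum_eq]
  apply List.Sublist.sum_le_sum (hsl.map _)
  intro x hx
  simp only [List.mem_map] at hx
  obtain ⟨d, hd, rfl⟩ := hx
  exact le_of_lt (T.w_pos _ _ d.adj)

lemma dist_triangle (u x v : α) : T.dist u v ≤ T.dist u x + T.dist x v := by
  obtain ⟨p, hp⟩ := (T.isTree.existsUnique_path u x).exists
  obtain ⟨q, hq⟩ := (T.isTree.existsUnique_path x v).exists
  calc T.dist u v ≤ T.wt (p.append q) := T.dist_le_wt _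
  _ = T.wt p + T.wt q := T.wt_append p q
  _ = T.dist u x + T.dist x v := by rw [T.dist_eq p hp, T.dist_eq q hq]

lemma dist_add_of_mem {u v x : α} {p : T.g.Walk u v} (hp : p.IsPath) (hx : x ∈ p.support) :
    T.dist u x + T.dist x v = T.dist u v := by
  classical
  have h := congrArg T.wt (Walk.take_spec p hx)
  rw [wt_append] at h
  rw [T.dist_eq _ (hp.takeUntil hx), T.dist_eq _ (hp.dropUntil hx), T.dist_eq p hp, h]

lemma isPath_append {u v w : α} {p : T.g.Walk u v} {q : T.g.Walk v w} (hp : p.IsPath)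
    (hq : q.IsPath) (h : ∀ x ∈ p.support, x ∈ q.support → x = v) : (p.append q).IsPath := by
  rw [Walk.isPath_def, Walk.support_append, List.nodup_append]
  refine ⟨hp.support_nodup, hq.support_nodup.tail, ?_⟩
  rintro x hx _ hx2 rfl
  have hxq : x ∈ q.support := by
    rw [Walk.support_eq_cons q]
    exact List.mem_cons_of_mem _ hx2
  have hxv : x = v := h x hx hxq
  subst hxv
  have := hq.support_nodup
  rw [Walk.support_eq_cons q, List.nodup_cons] at this
  exact this.1 hx2

lemma first_hit {c z u v : α} (q : T.g.Walk c z) (p : T.g.Walk u v) (hz : z ∈ p.support) :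
    ∃ (m : α) (r : T.g.Walk c m), m ∈ p.support ∧ ∀ x ∈ r.support, x ∈ p.support → x = m := by
  induction q with
  | nil => exact ⟨_, Walk.nil, hz, by simp⟩
  | @cons s t z hadj q' ih =>
    by_cases hs : s ∈ p.support
    · exact ⟨s, Walk.nil, hs, by simp⟩
    · obtain ⟨m, r, hm, hr⟩ := ih hz
      refine ⟨m, Walk.cons hadj r, hm, ?_⟩
      intro x hx hxp
      rw [Walk.support_cons, List.mem_cons] at hx
      rcases hx with rfl | hx
      · exact absurd hxp hs
      · exact hr x hx hxp

lemma median {u v : α} (p : T.g.Walk u v) (hp : p.IsPath) (c : α) :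
    ∃ m ∈ p.support, T.dist c u = T.dist c m + T.dist m u ∧
      T.dist c v = T.dist c m + T.dist m v := by
  classical
  obtain ⟨q, hq⟩ := (T.isTree.existsUnique_path c u).exists
  obtain ⟨m, r, hm, hr⟩ := T.first_hit q p (Walk.start_mem_support p)
  set r' := r.bypass with hr'
  have hr'path : r'.IsPath := r.bypass_isPath
  have hr'meet : ∀ x ∈ r'.support, x ∈ p.support → x = m := fun x hx =>
    hr x (r.support_bypass_subset hx)
  have key : ∀ (z : α) (s : T.g.Walk m z), s.IsPath → (∀ x ∈ s.support, x ∈ p.support) →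
      T.dist c z = T.dist c m + T.dist m z := by
    intro z s hs hsub
    have hpath : (r'.append s).IsPath :=
      T.isPath_append hr'path hs (fun x hx hx2 => hr'meet x hx (hsub x hx2))
    rw [T.dist_eq _ hpath, wt_append, ← T.dist_eq _ hr'path, ← T.dist_eq _ hs]
  refine ⟨m, hm, ?_, ?_⟩
  · have := key u (p.takeUntil m hm).reverse (hp.takeUntil hm).reverse
      (fun x hx => p.support_takeUntil_subset hm (by rwa [Walk.support_reverse, List.mem_reverse] at hx))
    exact this
  · exact key v (p.dropUntil m hm) (hp.dropUntil hm)
      (fun x hx => p.support_dropUntil_subset hm hx)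

end WTree

theorem forbidden_2K2_a : ¬ ∃ (β : Type) (T : WTree β) (a b c d : β) (dmin dmax : ℝ),
    T.IsLeaf a ∧ T.IsLeaf b ∧ T.IsLeaf c ∧ T.IsLeaf d ∧
    a ≠ b ∧ a ≠ c ∧ a ≠ d ∧ b ≠ c ∧ b ≠ d ∧ c ≠ d ∧
    0 ≤ dmin ∧ dmin ≤ dmax ∧
    dmin ≤ T.dist a b ∧ T.dist a b ≤ dmax ∧
    dmin ≤ T.dist c d ∧ T.dist c d ≤ dmax ∧
    T.dist a c < dmin ∧ T.dist a d < dmin ∧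
    T.dist b c < dmin ∧ T.dist b d < dmin := by
  rintro ⟨β, T, a, b, c, d, dmin, dmax, -, -, -, -, -, -, -, -, -, -, h0, hmm,
    hab1, hab2, hcd1, hcd2, hac, had, hbc, hbd⟩
  classical
  obtain ⟨p, hp⟩ := (T.isTree.existsUnique_path a b).exists
  obtain ⟨m, hm, hcm1, hcm2⟩ := T.median p hp c
  obtain ⟨n, hn, hdn1, hdn2⟩ := T.median p hp d
  have hamb := T.dist_add_of_mem hp hm
  have hanb := T.dist_add_of_mem hp hn
  have hcd : T.dist c d ≤ T.dist c m + T.dist m n + T.dist n d := by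
    have t1 := T.dist_triangle c m d
    have t2 := T.dist_triangle m n d
    linarith
  have c1 := T.dist_comm c a
  have c2 := T.dist_comm c b
  have c3 := T.dist_comm c m
  have c4 := T.dist_comm d a
  have c5 := T.dist_comm d b
  have c6 := T.dist_comm d n
  have c7 := T.dist_comm m n
  have c8 := T.dist_comm a m
  have c9 := T.dist_comm a n
  have c10 := T.dist_comm n a
  have c11 := T.dist_comm b n
  have c12 := T.dist_comm b m
  have hsplit : n ∈ (p.takeUntil m hm).support ∨ n ∈ (p.dropUntil m hm).support := by
    rw [← Walk.take_spec p hm, Walk.mem_support_append_iff] at hn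
    exact hn
  rcases hsplit with hcase | hcase
  · have h5 := T.dist_add_of_mem (hp.takeUntil hm) hcase
    linarith
  · have h5 := T.dist_add_of_mem (hp.dropUntil hm) hcase
    linarith
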